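/- Let (f_n)_{n∈ℤ} be a sequence of invertible linear maps between finite-dimensional inner product spaces with uniformly bounded norms ‖f_n‖, ‖f_n^{-1}‖ ≤ C. Suppose each space splits as E_n ⊕ F_n with f_n(E_n) = E_{n+1}, f_n(F_n) = F_{n+1}, and (2η)-domination: ‖f_n|_{E_n}‖ · ‖f_n^{-1}|_{F_{n+1}}‖ ≤ e^{-2η} for all n. If there exists m ≥ 0 such that ∏_{i=0}^{k-1} ‖f_{m+i}|_{E_{m+i}}‖ ≤ e^{-kη} for all k ≥ 1, and there exists m' ≤ 0 such that ∏_{i=0}^{k-1} ‖f_{m'-i-1}^{-1}|_{F_{m'-i}}‖ ≤ e^{-kη} for all k ≥ 1, then there exists an index j such that both ∏_{i=0}^{k-1} ‖f_{j+i}|_{E_{j+i}}‖ ≤ e^{-kη} for all k ≥ 1 and ∏_{i=0}^{k-1} ‖f_{j-i-1}^{-1}|_{F_{j-i}}‖ ≤ e^{-kη} for all k ≥ 1. -/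

import Mathlib

open Finset

/-- The norm of the linear map `f n` restricted to the subspace `E n`. -/
noncomputable def fwdNorm {V : ℤ → Type*} [∀ n, NormedAddCommGroup (V n)]
    [∀ n, InnerProductSpace ℝ (V n)]
    (f : ∀ n : ℤ, V n ≃L[ℝ] V (n + 1)) (E : ∀ n : ℤ, Submodule ℝ (V n)) (n : ℤ) : ℝ :=
  ‖(f n).toContinuousLinearMap.comp (E n).subtypeL‖

/-- The norm of the inverse `(f n)⁻¹` restricted to the subspace `F (n+1)`. -/
noncomputable def bwdNorm {V : ℤ → Type*} [∀ n, NormedAddCommGroup (V n)]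
    [∀ n, InnerProductSpace ℝ (V n)]
    (f : ∀ n : ℤ, V n ≃L[ℝ] V (n + 1)) (F : ∀ n : ℤ, Submodule ℝ (V n)) (n : ℤ) : ℝ :=
  ‖(f n).symm.toContinuousLinearMap.comp (F (n + 1)).subtypeL‖

/-- the Pliss–Pujals–Sambarino criterion for the existence of bi-Pliss
indices, for a sequence of invertible linear maps between finite-dimensional inner product
spaces with uniformly bounded norms, preserving a `2η`-dominated splitting `E_n ⊕ F_n`:
if some forward index `m ≥ 0` is `E`-Pliss and some backward index `m' ≤ 0` is `F`-Pliss,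
then some index `j` is bi-Pliss. -/



private lemma reidx (B : ℤ → ℝ) : ∀ (r : ℕ) (n : ℤ),
    ∏ i ∈ Finset.range r, B (n - (i : ℤ) - 1) = ∏ i ∈ Finset.range r, B (n - r + i) := by
  intro r
  induction r with
  | zero => intro n; simp
  | succ r ih =>
    intro n
    rw [Finset.prod_range_succ, Finset.prod_range_succ', ih]
    congr 1
    · apply Finset.prod_congr rfl
      intro i _
      congr 1
      push_cast
      ring
    · congr 1
      push_cast
      ring

private lemma gensplit (g : ℤ → ℝ) (a b : ℕ) (p : ℤ) :
    ∏ i ∈ Finset.range (a + b), g (p + i)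
      = (∏ i ∈ Finset.range a, g (p + i)) * ∏ i ∈ Finset.range b, g (p + a + i) := by
  rw [Finset.prod_range_add]
  congr 1
  apply Finset.prod_congr rfl
  intro i _
  congr 1
  push_cast
  ring

theorem exists_biPliss_index {V : ℤ → Type*} [∀ n, NormedAddCommGroup (V n)]
    [∀ n, InnerProductSpace ℝ (V n)] [∀ n, FiniteDimensional ℝ (V n)]
    (f : ∀ n : ℤ, V n ≃L[ℝ] V (n + 1)) (E F : ∀ n : ℤ, Submodule ℝ (V n))
    (C η : ℝ) (hη : 0 < η) (hC : 0 < C)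
    -- uniformly bounded norms
    (hbdd : ∀ n, ‖(f n).toContinuousLinearMap‖ ≤ C ∧ ‖(f n).symm.toContinuousLinearMap‖ ≤ C)
    -- each space splits as E_n ⊕ F_n
    (hcompl : ∀ n, IsCompl (E n) (F n))
    (hdimE : ∀ n m : ℤ, Module.finrank ℝ (E n) = Module.finrank ℝ (E m))
    (hdimF : ∀ n m : ℤ, Module.finrank ℝ (F n) = Module.finrank ℝ (F m))
    -- invariance of the splitting
    (hEinv : ∀ n, (E n).map ((f n).toLinearEquiv.toLinearMap) = E (n + 1))
    (hFinv : ∀ n, (F n).map ((f n).toLinearEquiv.toLinearMap) = F (n + 1))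
    -- (2η)-domination
    (hdom : ∀ n, fwdNorm f E n * bwdNorm f F n ≤ Real.exp (-(2 * η)))
    -- a forward E-Pliss index m ≥ 0
    (m : ℤ) (hm : 0 ≤ m)
    (hfwd : ∀ k : ℕ, 1 ≤ k →
      ∏ i ∈ Finset.range k, fwdNorm f E (m + (i : ℤ)) ≤ Real.exp (-(k : ℝ) * η))
    -- a backward F-Pliss index m' ≤ 0
    (m' : ℤ) (hm' : m' ≤ 0)
    (hbwd : ∀ k : ℕ, 1 ≤ k →
      ∏ i ∈ Finset.range k, bwdNorm f F (m' - (i : ℤ) - 1) ≤ Real.exp (-(k : ℝ) * η)) :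
    ∃ j : ℤ,
      (∀ k : ℕ, 1 ≤ k →
        ∏ i ∈ Finset.range k, fwdNorm f E (j + (i : ℤ)) ≤ Real.exp (-(k : ℝ) * η)) ∧
      (∀ k : ℕ, 1 ≤ k →
        ∏ i ∈ Finset.range k, bwdNorm f F (j - (i : ℤ) - 1) ≤ Real.exp (-(k : ℝ) * η)) := by
  classical
  have hm'm : m' ≤ m := hm'.trans hm
  have hAnn0 : ∀ n : ℤ, 0 ≤ fwdNorm f E n := by
    intro n; unfold fwdNorm; exact ContinuousLinearMap.opNorm_nonneg _
  have hBnn0 : ∀ n : ℤ, 0 ≤ bwdNorm f F n := by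
    intro n; unfold bwdNorm; exact ContinuousLinearMap.opNorm_nonneg _
  set FP : ℤ → Prop := fun j => ∀ k : ℕ, 1 ≤ k →
      ∏ i ∈ Finset.range k, bwdNorm f F (j - (i : ℤ) - 1) ≤ Real.exp (-(k : ℝ) * η)
    with hFPdef
  set S : Finset ℤ := (Finset.Icc m' m).filter FP with hSdef
  have hm'S : m' ∈ S := by
    refine Finset.mem_filter.mpr ⟨Finset.mem_Icc.mpr ⟨le_refl _, hm'm⟩, ?_⟩
    exact hbwd
  have hSne : S.Nonempty := ⟨m', hm'S⟩
  set j : ℤ := S.max' hSne with hjdef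
  obtain ⟨hjIcc, hjFP⟩ := Finset.mem_filter.mp (S.max'_mem hSne)
  obtain ⟨hm'j, hjm⟩ := Finset.mem_Icc.mp hjIcc
  have hmax : ∀ n : ℤ, j < n → n ≤ m → ¬ FP n := by
    intro n h1 h2 hFPn
    have hn : n ∈ S := Finset.mem_filter.mpr
      ⟨Finset.mem_Icc.mpr ⟨hm'j.trans h1.le, h2⟩, hFPn⟩
    exact absurd (Finset.le_max' S n hn) (not_le.mpr h1)
  -- key: between j and m, backward products grow (are > exp(-kη))
  have key : ∀ k : ℕ, 1 ≤ k → j + (k : ℤ) ≤ m →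
      Real.exp (-(k : ℝ) * η) < ∏ i ∈ Finset.range k, bwdNorm f F (j + (i : ℤ)) := by
    intro k
    induction k using Nat.strong_induction_on with
    | _ k IH =>
      intro hk1 hkm
      have hnot : ¬ FP (j + (k : ℤ)) := hmax _ (by omega) hkm
      simp only [hFPdef] at hnot
      push_neg at hnot
      obtain ⟨r, hr1, hrlt⟩ := hnot
      rw [reidx] at hrlt
      by_cases hrk : r ≤ k
      · rcases eq_or_lt_of_le hrk with rfl | hlt
        · refine lt_of_lt_of_eq hrlt (Finset.prod_congr rfl fun i _ => ?_)
          congr 1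
          omega
        · have IH' := IH (k - r) (by omega) (by omega) (by omega)
          have hsplit := gensplit (bwdNorm f F) (k - r) r j
          rw [show k - r + r = k from by omega] at hsplit
          rw [hsplit]
          have hsec : ∏ i ∈ Finset.range r, bwdNorm f F (j + ((k - r : ℕ) : ℤ) + i)
              = ∏ i ∈ Finset.range r, bwdNorm f F (j + (k : ℤ) - (r : ℤ) + i) :=
            Finset.prod_congr rfl fun i _ => by congr 1; omega
          have e1 : Real.exp (-((k - r : ℕ) : ℝ) * η) * Real.exp (-(r : ℝ) * η)
              = Real.exp (-(k : ℝ) * η) := by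
            rw [← Real.exp_add]
            congr 1
            push_cast [Nat.cast_sub hrk]
            ring
          rw [← e1]
          have := mul_lt_mul'' IH' (hrlt.trans_eq hsec.symm)
            (Real.exp_pos _).le (Real.exp_pos _).le
          exact this
      · have hkr : k < r := lt_of_not_ge hrk
        have hsplit := gensplit (bwdNorm f F) (r - k) k (j + (k : ℤ) - (r : ℤ))
        rw [show r - k + k = r from by omega] at hsplit
        have hsec : ∏ i ∈ Finset.range k,
            bwdNorm f F (j + (k : ℤ) - (r : ℤ) + ((r - k : ℕ) : ℤ) + i)
              = ∏ i ∈ Finset.range k, bwdNorm f F (j + (i : ℤ)) :=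
          Finset.prod_congr rfl fun i _ => by congr 1; omega
        rw [hsplit, hsec] at hrlt
        have hfst : ∏ i ∈ Finset.range (r - k), bwdNorm f F (j + (k : ℤ) - (r : ℤ) + i)
            ≤ Real.exp (-((r - k : ℕ) : ℝ) * η) := by
          have h0 := hjFP (r - k) (by omega)
          rw [reidx (bwdNorm f F) (r - k) j] at h0
          refine le_trans (le_of_eq (Finset.prod_congr rfl fun i _ => ?_)) h0
          congr 1
          omega
        have e1 : Real.exp (-((r - k : ℕ) : ℝ) * η) * Real.exp (-(k : ℝ) * η)
            = Real.exp (-(r : ℝ) * η) := by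
          rw [← Real.exp_add]
          congr 1
          push_cast [Nat.cast_sub hkr.le]
          ring
        have hPnn : (0:ℝ) ≤ ∏ i ∈ Finset.range k, bwdNorm f F (j + (i : ℤ)) :=
          Finset.prod_nonneg fun i _ => hBnn0 _
        nlinarith [Real.exp_pos (-((r - k : ℕ) : ℝ) * η), Real.exp_pos (-(k : ℝ) * η),
          mul_le_mul_of_nonneg_right hfst hPnn]
  -- forward products from j up to m are small
  have fwdA : ∀ k : ℕ, 1 ≤ k → j + (k : ℤ) ≤ m →
      ∏ i ∈ Finset.range k, fwdNorm f E (j + (i : ℤ)) ≤ Real.exp (-(k : ℝ) * η) := by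
    intro k hk1 hkm
    have hBp := key k hk1 hkm
    have hAB : (∏ i ∈ Finset.range k, fwdNorm f E (j + (i : ℤ)))
        * (∏ i ∈ Finset.range k, bwdNorm f F (j + (i : ℤ)))
        ≤ Real.exp (-(k : ℝ) * η) * Real.exp (-(k : ℝ) * η) := by
      rw [← Finset.prod_mul_distrib]
      calc ∏ i ∈ Finset.range k, fwdNorm f E (j + (i : ℤ)) * bwdNorm f F (j + (i : ℤ))
          ≤ ∏ _i ∈ Finset.range k, Real.exp (-(2 * η)) :=
            Finset.prod_le_prod (fun i _ => mul_nonneg (hAnn0 _) (hBnn0 _))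
              (fun i _ => hdom _)
        _ = Real.exp (-(2 * η)) ^ k := by rw [Finset.prod_const, Finset.card_range]
        _ = Real.exp (-(k : ℝ) * η) * Real.exp (-(k : ℝ) * η) := by
            rw [← Real.exp_nat_mul, ← Real.exp_add]
            congr 1
            ring
    have hAnn : (0:ℝ) ≤ ∏ i ∈ Finset.range k, fwdNorm f E (j + (i : ℤ)) :=
      Finset.prod_nonneg fun i _ => hAnn0 _
    nlinarith [Real.exp_pos (-(k : ℝ) * η),
      mul_le_mul_of_nonneg_left hBp.le hAnn]
  refine ⟨j, ?_, hjFP⟩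
  intro k hk1
  by_cases hcase : j + (k : ℤ) ≤ m
  · exact fwdA k hk1 hcase
  · push_neg at hcase
    set a : ℕ := (m - j).toNat with hadef
    have haz : (a : ℤ) = m - j := Int.toNat_of_nonneg (by omega)
    have hak : a < k := by omega
    have hsplit := gensplit (fwdNorm f E) a (k - a) j
    rw [show a + (k - a) = k from by omega] at hsplit
    have hsec : ∏ i ∈ Finset.range (k - a), fwdNorm f E (j + (a : ℤ) + i)
        = ∏ i ∈ Finset.range (k - a), fwdNorm f E (m + (i : ℤ)) :=
      Finset.prod_congr rfl fun i _ => by congr 1; omega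
    rw [hsplit, hsec]
    have h2 := hfwd (k - a) (by omega)
    have h1 : ∏ i ∈ Finset.range a, fwdNorm f E (j + (i : ℤ)) ≤ Real.exp (-(a : ℝ) * η) := by
      rcases Nat.eq_zero_or_pos a with h0 | hpos
      · rw [h0]
        norm_num
      · exact fwdA a hpos (by omega)
    have e1 : Real.exp (-(a : ℝ) * η) * Real.exp (-((k - a : ℕ) : ℝ) * η)
        = Real.exp (-(k : ℝ) * η) := by
      rw [← Real.exp_add]
      congr 1
      push_cast [Nat.cast_sub hak.le]
      ring
    rw [← e1]
    exact mul_le_mul h1 h2 (Finset.prod_nonneg fun i _ => hAnn0 _) (Real.exp_pos _).le
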